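/- Let n ≥ 1, Ω ⊆ 𝕆_sⁿ and let f : Ω → 𝕆 be strong slice regular. Then for every I ∈ 𝕊 such that Ω_I := Ω ∩ ℂ_Iⁿ is open in ℂ_Iⁿ, the restriction f_I := f|_{Ω_I} is holomorphic. -/

import Mathlib

/-! Octonions via the Cayley–Dickson construction on the quaternions,
the n-dimensional quadratic cone, the slice topology, and slice regularity. -/

noncomputable section
open Quaternion Topology

/-- The octonions, as `ℍ × ℍ` with the (L²) Euclidean norm and
Cayley–Dickson multiplication. -/
abbrev Oct : Type := WithLp 2 (ℍ × ℍ)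

namespace Oct

def c1 (p : Oct) : ℍ := (WithLp.equiv 2 (ℍ × ℍ) p).1
def c2 (p : Oct) : ℍ := (WithLp.equiv 2 (ℍ × ℍ) p).2
def mk (a b : ℍ) : Oct := (WithLp.equiv 2 (ℍ × ℍ)).symm (a, b)

instance : One Oct := ⟨mk 1 0⟩

/-- Cayley–Dickson multiplication. -/
instance : Mul Oct :=
  ⟨fun p q => mk (c1 p * c1 q - star (c2 q) * c2 p) (c2 q * c1 p + c2 p * star (c1 q))⟩

/-- Octonionic conjugation. -/
instance : Star Oct := ⟨fun p => mk (star (c1 p)) (-(c2 p))⟩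

/-- Inverse: `p⁻¹ = ‖p‖⁻² • (star p)` (so `0⁻¹ = 0`). -/
instance : Inv Oct := ⟨fun p => (‖p‖ ^ 2)⁻¹ • star p⟩

/-- The real inner product on `𝕆 ≅ ℝ⁸`, via polarization. -/
def oinner (p q : Oct) : ℝ := (1 / 4) * (‖p + q‖ ^ 2 - ‖p - q‖ ^ 2)

/-- The sphere `𝕊` of imaginary units of the octonions. -/
def Sph : Set Oct := {I | I * I = -1}

/-- The slice complex plane `ℂ_I = ℝ + ℝ I ⊆ 𝕆`. -/
def CI (I : Oct) : Set Oct := {z | ∃ s t : ℝ, z = s • (1 : Oct) + t • I}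

end Oct

open Oct

/-- The point `x + y I ∈ ℂ_Iⁿ ⊆ 𝕆ⁿ`. -/
def aff {n : ℕ} (x y : Fin n → ℝ) (I : Oct) : Fin n → Oct :=
  fun m => x m • (1 : Oct) + y m • I

/-- The embedding `ℝⁿ ⊆ 𝕆ⁿ`. -/
def ofRealn {n : ℕ} (x : Fin n → ℝ) : Fin n → Oct := fun m => x m • (1 : Oct)

/-- The slice `ℂ_Iⁿ ⊆ 𝕆ⁿ`. -/
def slicen (n : ℕ) (I : Oct) : Set (Fin n → Oct) := {q | ∃ x y : Fin n → ℝ, q = aff x y I}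

/-- The `n`-dimensional quadratic cone `𝕆ₛⁿ = ⋃_{I ∈ 𝕊} ℂ_Iⁿ`. -/
def cone (n : ℕ) : Set (Fin n → Oct) := ⋃ I ∈ Sph, slicen n I

/-- The slice topology `τ_s`: a set is open iff its trace on every slice `ℂ_Iⁿ`
is open (expressed via the canonical parametrizations `(x,y) ↦ x + yI`). -/
def τs (n : ℕ) : TopologicalSpace (Fin n → Oct) :=
  ⨆ I : Sph, TopologicalSpace.coinduced
    (fun p : (Fin n → ℝ) × (Fin n → ℝ) => aff p.1 p.2 I.1) inferInstance

/-- A slice-open subset of the quadratic cone. -/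
def SliceOpen (n : ℕ) (Ω : Set (Fin n → Oct)) : Prop :=
  Ω ⊆ cone n ∧ IsOpen[τs n] Ω

/-- A slice-domain: a nonempty slice-connected slice-open subset of the cone. -/
def SliceDomain (n : ℕ) (Ω : Set (Fin n → Oct)) : Prop :=
  SliceOpen n Ω ∧ @IsConnected _ (τs n) Ω

/-- Real-connectedness: `Ω ∩ ℝⁿ` is a (pre)connected subset of `ℝⁿ`. -/
def RealConnected (n : ℕ) (Ω : Set (Fin n → Oct)) : Prop :=
  IsPreconnected {x : Fin n → ℝ | ofRealn x ∈ Ω}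

/-- Axially symmetric subsets of the cone. -/
def AxSymm (n : ℕ) (Ω : Set (Fin n → Oct)) : Prop :=
  ∀ (x y : Fin n → ℝ), ∀ I ∈ Sph, ∀ J ∈ Sph, aff x y I ∈ Ω → aff x y J ∈ Ω

/-- The upper half-space `ℝ²ⁿ₊`: pairs `(x,y)` with `y = 0` or the first
nonzero coordinate of `y` positive. -/
def pos2n (n : ℕ) : Set ((Fin n → ℝ) × (Fin n → ℝ)) :=
  {p | p.2 = 0 ∨ ∃ m : Fin n, 0 < p.2 m ∧ ∀ k : Fin n, k < m → p.2 k = 0}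

/-- `Ω_{s₁}`. -/
def s1 {n : ℕ} (Ω : Set (Fin n → Oct)) : Set ((Fin n → ℝ) × (Fin n → ℝ)) :=
  {p | ∃ I ∈ Sph, aff p.1 p.2 I ∈ Ω}

/-- `Ω_{s₂}`. -/
def s2 {n : ℕ} (Ω : Set (Fin n → Oct)) : Set ((Fin n → ℝ) × (Fin n → ℝ)) :=
  {p | ∃ J ∈ Sph, ∃ K ∈ Sph, J ≠ K ∧ aff p.1 p.2 J ∈ Ω ∧ aff p.1 p.2 K ∈ Ω}

/-- Slice functions: induced on `Ω_{s₂}⁺` by a pair `(F₁, F₂)` via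
`f(x + yI) = F₁(x,y) + I·F₂(x,y)`. -/
def IsSliceFun (n : ℕ) (Ω : Set (Fin n → Oct)) (f : (Fin n → Oct) → Oct) : Prop :=
  ∃ F₁ F₂ : (Fin n → ℝ) × (Fin n → ℝ) → Oct,
    ∀ x y : Fin n → ℝ, (x, y) ∈ s2 Ω ∩ pos2n n → ∀ I ∈ Sph, aff x y I ∈ Ω →
      f (aff x y I) = F₁ (x, y) + I * F₂ (x, y)

/-- Holomorphy of a function of `n` slice variables, read through the
parametrization `(x,y) ↦ x + yI`: continuous partial derivatives (i.e. `C¹`)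
and the Cauchy–Riemann equations `(∂/∂xₘ + I ∂/∂yₘ) g = 0` on `U`. -/
def Holo (n : ℕ) (I : Oct) (g : (Fin n → ℝ) × (Fin n → ℝ) → Oct)
    (U : Set ((Fin n → ℝ) × (Fin n → ℝ))) : Prop :=
  ContDiffOn ℝ 1 g U ∧
  ∀ p ∈ U, ∀ m : Fin n,
    fderiv ℝ g p (Pi.single m 1, 0) + I * fderiv ℝ g p (0, Pi.single m 1) = 0

/-- Weak slice regularity: each restriction `f|_{Ω ∩ ℂ_Iⁿ}` is holomorphic. -/
def WSliceReg (n : ℕ) (Ω : Set (Fin n → Oct)) (f : (Fin n → Oct) → Oct) : Prop :=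
  ∀ I ∈ Sph, Holo n I (fun p => f (aff p.1 p.2 I)) {p | aff p.1 p.2 I ∈ Ω}

/-- The complex structure `σ(a,b) = (−b,a)` on `𝕆²`. -/
def sigma2 : Oct × Oct → Oct × Oct := fun w => (-w.2, w.1)

/-- Holomorphic stem maps: `F : V → 𝕆²` extends to a `C¹` map `G` on an open
neighborhood `U ⊇ V` satisfying `(∂/∂xₘ + σ ∂/∂yₘ) G = 0` on `U`. -/
def StemHolo (n : ℕ) (V : Set ((Fin n → ℝ) × (Fin n → ℝ)))
    (F : (Fin n → ℝ) × (Fin n → ℝ) → Oct × Oct) : Prop :=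
  ∃ (U : Set ((Fin n → ℝ) × (Fin n → ℝ))) (G : (Fin n → ℝ) × (Fin n → ℝ) → Oct × Oct),
    IsOpen U ∧ V ⊆ U ∧ Set.EqOn G F V ∧ ContDiffOn ℝ 1 G U ∧
    ∀ p ∈ U, ∀ m : Fin n,
      fderiv ℝ G p (Pi.single m 1, 0) + sigma2 (fderiv ℝ G p (0, Pi.single m 1)) = 0

/-- Strong slice regularity: `f` is induced by a holomorphic stem map on `Ω_{s₁}`. -/
def SSliceReg (n : ℕ) (Ω : Set (Fin n → Oct)) (f : (Fin n → Oct) → Oct) : Prop :=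
  ∃ F : (Fin n → ℝ) × (Fin n → ℝ) → Oct × Oct, StemHolo n (s1 Ω) F ∧
    ∀ x y : Fin n → ℝ, ∀ I ∈ Sph, aff x y I ∈ Ω →
      f (aff x y I) = (F (x, y)).1 + I * (F (x, y)).2

/-- An s-basis `{I, J, K}` of the octonions. -/
def IsSBasis (I J K : Oct) : Prop :=
  I ∈ Sph ∧ J ∈ Sph ∧ K ∈ Sph ∧
  LinearIndependent ℝ ![(1 : Oct), I, J, I * J, K, J * K, I * K, (I * J) * K] ∧
  Submodule.span ℝ (Set.range ![(1 : Oct), I, J, I * J, K, J * K, I * K, (I * J) * K]) = ⊤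

/-- Iterated left multiplication `L_w^β = (L_{w₁})^{β₁} ∘ ⋯ ∘ (L_{wₙ})^{βₙ}`. -/
def Lpow {n : ℕ} (w : Fin n → Oct) (β : Fin n → ℕ) : Oct → Oct :=
  fun a => (List.finRange n).foldr (fun ℓ c => (fun o => w ℓ * o)^[β ℓ] c) a

/-- The `*`-power `(q − p)^{*α} a = ∑_{β ≤ α} C(α,β) L_q^β (L_{−p}^{α−β} a)`. -/
def starPow {n : ℕ} (p : Fin n → Oct) (α : Fin n → ℕ) (a : Oct) (q : Fin n → Oct) : Oct :=
  ∑ β ∈ Finset.Iic α, (∏ ℓ, (α ℓ).choose (β ℓ)) • Lpow q β (Lpow (-p) (α - β) a)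

/-- The `ℓ`-th slice derivative `∂_ℓ f (x + w) = (∂/∂x_ℓ) f (x + w)`. -/
def sderiv {n : ℕ} (ℓ : Fin n) (f : (Fin n → Oct) → Oct) : (Fin n → Oct) → Oct :=
  fun q => deriv (fun t : ℝ => f (fun m => q m + (if m = ℓ then t else 0) • (1 : Oct))) 0

/-- The iterated slice derivative `f^{(α)} = (∂₁)^{α₁} ⋯ (∂ₙ)^{αₙ} f`. -/
def sderivMulti {n : ℕ} (α : Fin n → ℕ) (f : (Fin n → Oct) → Oct) : (Fin n → Oct) → Oct :=
  (List.finRange n).foldr (fun ℓ g => (sderiv ℓ)^[α ℓ] g) f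

/-- The slice-polydisc `P̃(q₀, r)` (relative to `I ∈ 𝕊` with `q₀ ∈ ℂ_Iⁿ`):
points `x + yJ` with `x ± yI` in the closed polydisc `P_I(q₀, r)`. -/
def polyDisc {n : ℕ} (q₀ : Fin n → Oct) (I : Oct) (r : Fin n → ℝ) : Set (Fin n → Oct) :=
  {q | ∃ x y : Fin n → ℝ, ∃ J ∈ Sph, q = aff x y J ∧
        (∀ ℓ, ‖aff x y I ℓ - q₀ ℓ‖ ≤ r ℓ) ∧ (∀ ℓ, ‖aff x (-y) I ℓ - q₀ ℓ‖ ≤ r ℓ)}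


/-! ### Auxiliary lemmas -/

private lemma oc1_mul (p q : Oct) : c1 (p*q) = c1 p * c1 q - star (c2 q) * c2 p := rfl
private lemma oc2_mul (p q : Oct) : c2 (p*q) = c2 q * c1 p + c2 p * star (c1 q) := rfl
private lemma oc1_add (p q : Oct) : c1 (p+q) = c1 p + c1 q := rfl
private lemma oc2_add (p q : Oct) : c2 (p+q) = c2 p + c2 q := rfl
private lemma oc1_neg (p : Oct) : c1 (-p) = -c1 p := rfl
private lemma oc2_neg (p : Oct) : c2 (-p) = -c2 p := rfl
private lemma oc1_smul (r : ℝ) (p : Oct) : c1 (r • p) = r • c1 p := rfl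
private lemma oc2_smul (r : ℝ) (p : Oct) : c2 (r • p) = r • c2 p := rfl
private lemma oc1_one : c1 (1 : Oct) = 1 := rfl
private lemma oc2_one : c2 (1 : Oct) = 0 := rfl
private lemma oct_ext {p q : Oct} (h1 : c1 p = c1 q) (h2 : c2 p = c2 q) : p = q :=
  (WithLp.equiv 2 (ℍ × ℍ)).injective (Prod.ext h1 h2)

private lemma quat_sq1 (i1 i2 a1 a2 : ℍ) (h1 : i1*i1 - star i2 * i2 = -1)
    (h2 : i2*i1 + i2*star i1 = 0) :
    i1 * (i1*a1 - star a2 * i2) - star (a2*i1 + i2*star a1) * i2 = -a1 := by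
  have hr : i1 + star i1 = ((2 * i1.re : ℝ) : ℍ) := Quaternion.self_add_star' i1
  have h2' : i2 * ((2 * i1.re : ℝ) : ℍ) = 0 := by rw [← hr, mul_add]; exact h2
  have hz : (2 * i1.re) • i2 = 0 := by rw [← Quaternion.mul_coe_eq_smul]; exact h2'
  have hs : star i2 * i2 = ((normSq i2 : ℝ) : ℍ) := Quaternion.star_mul_self i2
  calc i1 * (i1*a1 - star a2 * i2) - star (a2*i1 + i2*star a1) * i2
      = (i1*i1 - star i2 * i2)*a1 - ((i1 + star i1) * star a2) * i2
        + ((star i2 * i2) * a1 - a1 * (star i2 * i2)) := by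
        simp only [star_add, star_mul, star_star]
        noncomm_ring
    _ = -a1 := by
        rw [h1, hs, hr, Quaternion.coe_mul_eq_smul, smul_mul_assoc, ← mul_smul_comm,
          hz, mul_zero, ← Quaternion.coe_commutes]
        noncomm_ring

private lemma quat_sq2 (i1 i2 a1 a2 : ℍ) (h1 : i1*i1 - star i2 * i2 = -1)
    (h2 : i2*i1 + i2*star i1 = 0) :
    (a2*i1 + i2*star a1)*i1 + i2 * star (i1*a1 - star a2*i2) = -a2 := by
  have hr : i1 + star i1 = ((2 * i1.re : ℝ) : ℍ) := Quaternion.self_add_star' i1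
  have h2' : i2 * ((2 * i1.re : ℝ) : ℍ) = 0 := by rw [← hr, mul_add]; exact h2
  have hz : (2 * i1.re) • i2 = 0 := by rw [← Quaternion.mul_coe_eq_smul]; exact h2'
  have hs : star i2 * i2 = ((normSq i2 : ℝ) : ℍ) := Quaternion.star_mul_self i2
  have hs' : i2 * star i2 = ((normSq i2 : ℝ) : ℍ) := by rw [← star_comm_self]; exact hs
  have h1' : i1*i1 = -1 + ((normSq i2 : ℝ) : ℍ) := by
    rw [← hs, ← h1]; noncomm_ring
  calc (a2*i1 + i2*star a1)*i1 + i2 * star (i1*a1 - star a2*i2)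
      = a2*(i1*i1) - (i2*star i2)*a2 + (i2*star a1)*(i1 + star i1) := by
        simp only [star_sub, star_mul, star_star]
        noncomm_ring
    _ = -a2 := by
        rw [h1', hs', hr, Quaternion.mul_coe_eq_smul, ← smul_mul_assoc, hz, zero_mul,
          Quaternion.coe_commutes]
        noncomm_ring

/-- For `I ∈ 𝕊`, `I (I a) = -a`. -/
private lemma sph_mul_mul {I : Oct} (hI : I ∈ Sph) (a : Oct) : I * (I * a) = -a := by
  have h1 : c1 I * c1 I - star (c2 I) * c2 I = -1 := by
    have := congrArg c1 hI
    rwa [oc1_mul, oc1_neg, oc1_one] at this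
  have h2 : c2 I * c1 I + c2 I * star (c1 I) = 0 := by
    have := congrArg c2 hI
    rwa [oc2_mul, oc2_neg, oc2_one, neg_zero] at this
  refine oct_ext ?_ ?_
  · rw [oc1_mul, oc1_mul, oc2_mul, oc1_neg]
    exact quat_sq1 _ _ _ _ h1 h2
  · rw [oc2_mul, oc2_mul, oc1_mul, oc2_neg]
    exact quat_sq2 _ _ _ _ h1 h2

private lemma oct_mul_add (I a b : Oct) : I * (a + b) = I * a + I * b := by
  refine oct_ext ?_ ?_
  · simp only [oc1_mul, oc1_add, oc2_add, star_add]
    noncomm_ring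
  · simp only [oc2_mul, oc1_add, oc2_add, star_add]
    noncomm_ring

private lemma oct_mul_smul (r : ℝ) (I a : Oct) : I * (r • a) = r • (I * a) := by
  refine oct_ext ?_ ?_ <;>
  · simp only [oc1_mul, oc2_mul, oc1_smul, oc2_smul]
    simp only [Quaternion.star_smul, smul_mul_assoc, mul_smul_comm, smul_sub, smul_add]

/-- Left multiplication by `I` as a continuous linear map. -/
private def LI (I : Oct) : Oct →L[ℝ] Oct :=
  LinearMap.toContinuousLinearMap
    { toFun := fun a => I * a
      map_add' := oct_mul_add I
      map_smul' := fun r a => oct_mul_smul r I a }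

private lemma LI_apply (I a : Oct) : LI I a = I * a := rfl

private lemma oct_mul_neg (I a : Oct) : I * (-a) = -(I * a) := (LI I).map_neg a

/-- A strong slice regular function is holomorphic on every
slice `Ω_I = Ω ∩ ℂ_Iⁿ` that is open in `ℂ_Iⁿ`. -/
theorem strong_slice_regular_holomorphic_on_slices (n : ℕ) (hn : 1 ≤ n)
    (Ω : Set (Fin n → Oct)) (hΩ : Ω ⊆ cone n) (f : (Fin n → Oct) → Oct)
    (hf : SSliceReg n Ω f) :
    ∀ I ∈ Sph, IsOpen {p : (Fin n → ℝ) × (Fin n → ℝ) | aff p.1 p.2 I ∈ Ω} →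
      Holo n I (fun p => f (aff p.1 p.2 I)) {p | aff p.1 p.2 I ∈ Ω} := by
  obtain ⟨F, ⟨U, G, hUopen, hsub, hEq, hG, hCR⟩, hrep⟩ := hf
  intro I hI hVopen
  set V : Set ((Fin n → ℝ) × (Fin n → ℝ)) := {p | aff p.1 p.2 I ∈ Ω} with hVdef
  have hVs1 : V ⊆ s1 Ω := fun p hp => ⟨I, hI, hp⟩
  have hVU : V ⊆ U := hVs1.trans hsub
  set A : (Oct × Oct) →L[ℝ] Oct :=
    (ContinuousLinearMap.fst ℝ Oct Oct) + (LI I).comp (ContinuousLinearMap.snd ℝ Oct Oct)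
    with hAdef
  have hAapp : ∀ w : Oct × Oct, A w = w.1 + I * w.2 := fun w => rfl
  set g : (Fin n → ℝ) × (Fin n → ℝ) → Oct := fun p => A (G p) with hgdef
  have hgV : ∀ p ∈ V, f (aff p.1 p.2 I) = g p := by
    intro p hp
    have h1 := hrep p.1 p.2 I hI hp
    have h2 : G p = F p := hEq (hVs1 hp)
    rw [hgdef]
    simp only [hAapp]
    rw [h2, h1]
  have hgC : ContDiffOn ℝ 1 g U := A.contDiff.comp_contDiffOn hG
  constructor
  · exact ((hgC.mono hVU).congr hgV : ContDiffOn ℝ 1 (fun p => f (aff p.1 p.2 I)) V)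
  · intro p hp m
    have hGd : DifferentiableAt ℝ G p :=
      (hG.contDiffAt (hUopen.mem_nhds (hVU hp))).differentiableAt one_ne_zero
    have hfg : (fun p => f (aff p.1 p.2 I)) =ᶠ[nhds p] g :=
      Filter.eventuallyEq_of_mem (hVopen.mem_nhds hp) hgV
    have hfd : fderiv ℝ (fun p => f (aff p.1 p.2 I)) p = fderiv ℝ g p := hfg.fderiv_eq
    have hgd : fderiv ℝ g p = A.comp (fderiv ℝ G p) :=
      (A.hasFDerivAt.comp p hGd.hasFDerivAt).fderiv
    rw [hfd, hgd]
    set D1 : Oct × Oct := fderiv ℝ G p (Pi.single m 1, 0) with hD1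
    set D2 : Oct × Oct := fderiv ℝ G p (0, Pi.single m 1) with hD2
    have hcr := hCR p (hVU hp) m
    rw [← hD1, ← hD2] at hcr
    have e1 : D1.1 = D2.2 := by
      have := congrArg Prod.fst hcr
      simp only [sigma2, Prod.fst_add, Prod.fst_zero] at this
      exact add_neg_eq_zero.mp this
    have e2 : D1.2 = -D2.1 := by
      have := congrArg Prod.snd hcr
      simp only [sigma2, Prod.snd_add, Prod.snd_zero] at this
      exact eq_neg_of_add_eq_zero_left this
    simp only [ContinuousLinearMap.comp_apply, ← hD1, ← hD2, hAapp]
    rw [e1, e2, oct_mul_add, oct_mul_neg, sph_mul_mul hI]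
    abel


end
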